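/- Suppose t₀ > k₁² and t₀ > k₂² with k₁ ≠ k₂, t₀−k₁² ∉ π²ℤ₊², t₀−k₂² ∉ π²ℤ₊², and f(t₀) = 0 where f(t) = √(t−k₁²)·cot(√(t−k₁²)) − √(t−k₂²)·cot(√(t−k₂²)). Then f′(t₀) = (k₂²−k₁²)·h·(h−1) / (2(t₀−k₂²)(t₀−k₁²)), where h = √(t₀−k₁²)·cot(√(t₀−k₁²)). -/

import Mathlib

lemma sin_sqrt_ne_zero_of (u : ℝ) (hu : 0 < u)
    (hs : ∀ n : ℕ, 0 < n → u ≠ (n : ℝ) ^ 2 * Real.pi ^ 2) :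
    Real.sin (Real.sqrt u) ≠ 0 := by
  intro h
  obtain ⟨n, hn⟩ := Real.sin_eq_zero_iff.mp h
  have hspos : 0 < Real.sqrt u := Real.sqrt_pos.mpr hu
  have hnpos : 0 < n := by
    by_contra hle
    push_neg at hle
    nlinarith [Real.pi_pos, hn, (show (n:ℝ) ≤ 0 by exact_mod_cast hle)]
  have : u = (n.toNat : ℝ) ^ 2 * Real.pi ^ 2 := by
    have : ((n.toNat : ℤ) : ℝ) = (n : ℝ) := by rw [Int.toNat_of_nonneg hnpos.le]
    push_cast at this ⊢
    rw [this]
    nlinarith [Real.sq_sqrt hu.le, hn]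
  exact hs n.toNat (by omega) this

lemma aux_deriv (c t₀ : ℝ) (hu : 0 < t₀ - c)
    (hsin : Real.sin (Real.sqrt (t₀ - c)) ≠ 0) :
    HasDerivAt (fun t : ℝ => Real.sqrt (t - c) *
        (Real.cos (Real.sqrt (t - c)) / Real.sin (Real.sqrt (t - c))))
      ((Real.sqrt (t₀ - c) * (Real.cos (Real.sqrt (t₀ - c)) / Real.sin (Real.sqrt (t₀ - c))) -
        (Real.sqrt (t₀ - c) * (Real.cos (Real.sqrt (t₀ - c)) / Real.sin (Real.sqrt (t₀ - c)))) ^ 2 -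
        (t₀ - c)) / (2 * (t₀ - c))) t₀ := by
  set s := Real.sqrt (t₀ - c) with hs
  have hspos : 0 < s := Real.sqrt_pos.mpr hu
  have hinner : HasDerivAt (fun t : ℝ => Real.sqrt (t - c)) (1 / (2 * s)) t₀ := by
    have h1 : HasDerivAt (fun t : ℝ => t - c) 1 t₀ := (hasDerivAt_id t₀).sub_const c
    have h2 := (Real.hasDerivAt_sqrt (ne_of_gt hu)).comp t₀ h1
    exact h2.congr_deriv (mul_one _)
  have houter : HasDerivAt (fun x : ℝ => x * (Real.cos x / Real.sin x))
      (1 * (Real.cos s / Real.sin s) +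
        s * ((-Real.sin s * Real.sin s - Real.cos s * Real.cos s) / Real.sin s ^ 2)) s :=
    (hasDerivAt_id s).mul ((Real.hasDerivAt_cos s).div (Real.hasDerivAt_sin s) hsin)
  have h := houter.comp t₀ hinner
  refine h.congr_deriv ?_
  have hsq : s ^ 2 = t₀ - c := Real.sq_sqrt hu.le
  rw [show t₀ - c = s ^ 2 from hsq.symm]
  field_simp
  ring

/-- Derivative formula for `f(t) = √(t−k₁²)·cot(√(t−k₁²)) − √(t−k₂²)·cot(√(t−k₂²))`
at a zero `t₀` of `f`. -/
theorem deriv_f_at_zero (k₁ k₂ t₀ : ℝ) (hk₁ : 0 < k₁) (hk₂ : 0 < k₂) (hne : k₁ ≠ k₂)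
    (h₁ : k₁ ^ 2 < t₀) (h₂ : k₂ ^ 2 < t₀)
    (hs₁ : ∀ n : ℕ, 0 < n → t₀ - k₁ ^ 2 ≠ (n : ℝ) ^ 2 * Real.pi ^ 2)
    (hs₂ : ∀ n : ℕ, 0 < n → t₀ - k₂ ^ 2 ≠ (n : ℝ) ^ 2 * Real.pi ^ 2)
    (hzero :
      Real.sqrt (t₀ - k₁ ^ 2) *
          (Real.cos (Real.sqrt (t₀ - k₁ ^ 2)) / Real.sin (Real.sqrt (t₀ - k₁ ^ 2))) -
        Real.sqrt (t₀ - k₂ ^ 2) *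
          (Real.cos (Real.sqrt (t₀ - k₂ ^ 2)) / Real.sin (Real.sqrt (t₀ - k₂ ^ 2))) = 0) :
    HasDerivAt
      (fun t : ℝ =>
        Real.sqrt (t - k₁ ^ 2) *
            (Real.cos (Real.sqrt (t - k₁ ^ 2)) / Real.sin (Real.sqrt (t - k₁ ^ 2))) -
          Real.sqrt (t - k₂ ^ 2) *
            (Real.cos (Real.sqrt (t - k₂ ^ 2)) / Real.sin (Real.sqrt (t - k₂ ^ 2))))
      ((k₂ ^ 2 - k₁ ^ 2) *
          (Real.sqrt (t₀ - k₁ ^ 2) *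
            (Real.cos (Real.sqrt (t₀ - k₁ ^ 2)) / Real.sin (Real.sqrt (t₀ - k₁ ^ 2)))) *
          ((Real.sqrt (t₀ - k₁ ^ 2) *
              (Real.cos (Real.sqrt (t₀ - k₁ ^ 2)) / Real.sin (Real.sqrt (t₀ - k₁ ^ 2)))) - 1) /
        (2 * (t₀ - k₂ ^ 2) * (t₀ - k₁ ^ 2))) t₀ := by
  have hu₁ : 0 < t₀ - k₁ ^ 2 := by linarith
  have hu₂ : 0 < t₀ - k₂ ^ 2 := by linarith
  have hsin₁ := sin_sqrt_ne_zero_of _ hu₁ hs₁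
  have hsin₂ := sin_sqrt_ne_zero_of _ hu₂ hs₂
  have hA := aux_deriv (k₁ ^ 2) t₀ hu₁ hsin₁
  have hB := aux_deriv (k₂ ^ 2) t₀ hu₂ hsin₂
  have h := hA.sub hB
  refine h.congr_deriv ?_
  set H₁ := Real.sqrt (t₀ - k₁ ^ 2) *
      (Real.cos (Real.sqrt (t₀ - k₁ ^ 2)) / Real.sin (Real.sqrt (t₀ - k₁ ^ 2))) with hH₁
  set H₂ := Real.sqrt (t₀ - k₂ ^ 2) *
      (Real.cos (Real.sqrt (t₀ - k₂ ^ 2)) / Real.sin (Real.sqrt (t₀ - k₂ ^ 2))) with hH₂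
  have hz : H₂ = H₁ := by linarith [hzero]
  rw [hz]
  field_simp
  ring
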